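/- Fix real m ≥ 1 and integer k ≥ 4. Then ∑_{n > m, n ∈ ℤ} (n/m)^{-k + 3/2 + 2ε}·(n/m - 1)^{2ε} ≤ A(ε)·(m/k + 1) for every ε ∈ (0, 1/4) and some constant A(ε), for all k with k - 5/2 - 4ε ≥ 1. -/

import Mathlib

lemma key_ineq {t x : ℝ} (ht : 1 ≤ t) (hx : 1 ≤ x) :
    t * (x+1) ^ (-(t+1)) ≤ x ^ (-t) - (x+1) ^ (-t) := by
  have hx0 : (0:ℝ) < x := by linarith
  have hx1 : (0:ℝ) < x + 1 := by linarith
  have hA : (0:ℝ) < x ^ t := Real.rpow_pos_of_pos hx0 t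
  have hB : (0:ℝ) < (x+1) ^ t := Real.rpow_pos_of_pos hx1 t
  have hbern : 1 + t * (1/x) ≤ (1 + 1/x) ^ t :=
    one_add_mul_self_le_rpow_one_add (by linarith [one_div_pos.mpr hx0]) ht
  have hsplit : (x+1) ^ t = x ^ t * (1 + 1/x) ^ t := by
    rw [← Real.mul_rpow hx0.le (by positivity)]
    congr 1; field_simp
  have key : t * x ^ t ≤ (x+1) * ((x+1)^t - x^t) := by
    have h1 : x ^ t * (1 + t * (1/x)) ≤ (x+1)^t := by
      rw [hsplit]; nlinarith [hA]
    have h2 : t * x ^ t / x ≤ (x+1)^t - x^t := by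
      have : x ^ t * (1 + t * (1/x)) = x^t + t * x^t / x := by field_simp
      linarith [this ▸ h1]
    have h3 : (0:ℝ) ≤ (x+1)^t - x^t := le_trans (by positivity) h2
    calc t * x ^ t = (t * x^t / x) * x := by field_simp
    _ ≤ ((x+1)^t - x^t) * (x+1) := mul_le_mul h2 (by linarith) hx0.le h3
    _ = (x+1) * ((x+1)^t - x^t) := by ring
  have e1 : (x+1) ^ (-(t+1)) = ((x+1)^t * (x+1))⁻¹ := by
    rw [Real.rpow_neg hx1.le, Real.rpow_add hx1, Real.rpow_one]
  have e2 : x ^ (-t) = (x^t)⁻¹ := Real.rpow_neg hx0.le t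
  have e3 : (x+1) ^ (-t) = ((x+1)^t)⁻¹ := Real.rpow_neg hx1.le t
  rw [e1, e2, e3]
  rw [inv_eq_one_div, inv_eq_one_div, inv_eq_one_div,
    div_sub_div _ _ hA.ne' hB.ne', mul_one_div, div_le_div_iff₀ (by positivity) (by positivity)]
  nlinarith [key, hA, hB, mul_pos hA hB]

/-- Tail sum bound: `∑_{n > m} (n/m)^{-k+3/2+2ε} (n/m - 1)^{2ε} ≤ A(ε)(m/k + 1)`. -/
theorem tail_sum_bound (ε : ℝ) (hε₀ : 0 < ε) (hε₁ : ε < 1/4) :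
    ∃ A : ℝ, 0 < A ∧ ∀ m : ℝ, 1 ≤ m → ∀ k : ℕ, 4 ≤ k → 1 ≤ (k : ℝ) - 5/2 - 4 * ε →
      Summable (fun n : ℕ => if m < (n : ℝ) then
          ((n : ℝ) / m) ^ (-(k : ℝ) + 3/2 + 2 * ε) * ((n : ℝ) / m - 1) ^ (2 * ε) else 0) ∧
      ∑' n : ℕ, (if m < (n : ℝ) then
          ((n : ℝ) / m) ^ (-(k : ℝ) + 3/2 + 2 * ε) * ((n : ℝ) / m - 1) ^ (2 * ε) else 0) ≤
        A * (m / (k : ℝ) + 1) := by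
  refine ⟨8, by norm_num, ?_⟩
  intro m hm k hk4 hks
  have hm0 : (0:ℝ) < m := by linarith
  set s : ℝ := (k:ℝ) - 3/2 - 4*ε with hs_def
  have hs1 : 1 ≤ s - 1 := by simp only [hs_def]; linarith
  have hs0 : (0:ℝ) < s := by linarith
  set f : ℕ → ℝ := fun n : ℕ => if m < (n : ℝ) then
      ((n : ℝ) / m) ^ (-(k : ℝ) + 3/2 + 2 * ε) * ((n : ℝ) / m - 1) ^ (2 * ε) else 0 with hf_def
  have hf_nonneg : ∀ n, 0 ≤ f n := by
    intro n
    simp only [hf_def]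
    split_ifs with h
    · have h1 : (0:ℝ) ≤ (n:ℝ)/m := by positivity
      have h2 : (0:ℝ) ≤ (n:ℝ)/m - 1 := by
        rw [sub_nonneg, le_div_iff₀ hm0, one_mul]; linarith
      exact mul_nonneg (Real.rpow_nonneg h1 _) (Real.rpow_nonneg h2 _)
    · exact le_rfl
  -- pointwise bound f n ≤ g n
  set g : ℕ → ℝ := fun n : ℕ => if m < (n : ℝ) then m ^ s * (n:ℝ) ^ (-s) else 0 with hg_def
  have hfg : ∀ n, f n ≤ g n := by
    intro n
    simp only [hf_def, hg_def]
    split_ifs with h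
    · have hn0 : (0:ℝ) < (n:ℝ) := lt_of_le_of_lt hm0.le h
      have hq0 : (0:ℝ) < (n:ℝ)/m := by positivity
      have h1 : ((n:ℝ)/m - 1) ^ (2*ε) ≤ ((n:ℝ)/m) ^ (2*ε) := by
        apply Real.rpow_le_rpow
        · rw [sub_nonneg, le_div_iff₀ hm0, one_mul]; linarith
        · linarith
        · linarith
      calc ((n : ℝ) / m) ^ (-(k : ℝ) + 3/2 + 2 * ε) * ((n : ℝ) / m - 1) ^ (2 * ε)
          ≤ ((n : ℝ) / m) ^ (-(k : ℝ) + 3/2 + 2 * ε) * ((n : ℝ) / m) ^ (2 * ε) := by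
            apply mul_le_mul_of_nonneg_left h1 (Real.rpow_nonneg hq0.le _)
        _ = ((n : ℝ) / m) ^ (-s) := by
            rw [← Real.rpow_add hq0]; congr 1; simp only [hs_def]; ring
        _ = m ^ s * (n:ℝ) ^ (-s) := by
            rw [Real.div_rpow hn0.le hm0.le, Real.rpow_neg hm0.le,
              div_eq_mul_inv, inv_inv, mul_comm]
    · exact le_rfl
  -- the partial sum bound
  set B : ℝ := 1 + m / (s - 1) with hB_def
  set n₀ : ℕ := ⌊m⌋₊ + 1 with hn₀_def
  have hmn₀ : m < (n₀ : ℕ) := by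
    push_cast [hn₀_def]
    exact lt_of_lt_of_le (Nat.lt_floor_add_one m) (by push_cast; linarith)
  have hn₀m : (n₀ : ℝ) ≤ m + 1 := by
    push_cast [hn₀_def]
    have := Nat.floor_le hm0.le (R := ℝ) (a := m)
    linarith
  have hg_zero : ∀ i < n₀, g i = 0 := by
    intro i hi
    have hle : (i:ℝ) ≤ m := by
      have h1 : i ≤ ⌊m⌋₊ := Nat.lt_succ_iff.mp hi
      calc (i:ℝ) ≤ (⌊m⌋₊ : ℝ) := by exact_mod_cast h1
        _ ≤ m := Nat.floor_le hm0.le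
    simp only [hg_def]
    rw [if_neg (not_lt.mpr hle)]
  have hps : ∀ N, ∑ i ∈ Finset.range N, f i ≤ B := by
    intro N
    have step1 : ∑ i ∈ Finset.range N, f i ≤ ∑ i ∈ Finset.range N, g i :=
      Finset.sum_le_sum fun i _ => hfg i
    refine step1.trans ?_
    have hBpos : 0 ≤ B := by
      have : 0 ≤ m / (s-1) := by positivity
      simp only [hB_def]; linarith
    rcases le_or_gt N n₀ with hN | hN
    · have : ∑ i ∈ Finset.range N, g i = 0 :=
        Finset.sum_eq_zero fun i hi => hg_zero i (lt_of_lt_of_le (Finset.mem_range.mp hi) hN)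
      rw [this]; exact hBpos
    · -- split the sum
      rw [Finset.range_eq_Ico, ← Finset.sum_Ico_consecutive _ (Nat.zero_le n₀) hN.le]
      have hfirst : ∑ i ∈ Finset.Ico 0 n₀, g i = 0 :=
        Finset.sum_eq_zero fun i hi => hg_zero i (Finset.mem_Ico.mp hi).2
      rw [hfirst, zero_add]
      rw [Finset.sum_eq_sum_Ico_succ_bot hN]
      have hterm0 : g n₀ ≤ 1 := by
        simp only [hg_def, if_pos hmn₀]
        have hn₀pos : (0:ℝ) < (n₀:ℝ) := lt_trans hm0 hmn₀
        rw [Real.rpow_neg hn₀pos.le, ← div_eq_mul_inv, div_le_one (Real.rpow_pos_of_pos hn₀pos s)]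
        exact Real.rpow_le_rpow hm0.le hmn₀.le hs0.le
      -- tail bound
      have htail : ∑ i ∈ Finset.Ico (n₀+1) N, g i ≤ m / (s - 1) := by
        rw [Finset.sum_Ico_eq_sum_range]
        set C : ℝ := m ^ s / (s - 1) with hC_def
        have hC0 : 0 ≤ C := by positivity
        set h : ℕ → ℝ := fun i => ((n₀ + i : ℕ) : ℝ) ^ (-(s-1)) with hh_def
        have hbound : ∀ i, g (n₀ + 1 + i) ≤ C * (h i - h (i+1)) := by
          intro i
          have hx1 : (1:ℝ) ≤ ((n₀ + i : ℕ) : ℝ) := by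
            have : 1 ≤ n₀ + i := by omega
            exact_mod_cast this
          have hkey := key_ineq hs1 hx1
          have hcast : ((n₀ + i : ℕ) : ℝ) + 1 = ((n₀ + 1 + i : ℕ) : ℝ) := by push_cast; ring
          have hst : s - 1 + 1 = s := by ring
          rw [hcast, hst] at hkey
          have hmlt : m < ((n₀ + 1 + i : ℕ) : ℝ) := by
            refine lt_of_lt_of_le hmn₀ ?_
            exact_mod_cast Nat.le_add_right n₀ (1 + i) |>.trans (by omega)
          simp only [hg_def, if_pos hmlt, hh_def, hC_def, hcast]
          calc m ^ s * ((n₀ + 1 + i : ℕ) : ℝ) ^ (-s)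
              = m ^ s / (s-1) * ((s-1) * ((n₀ + 1 + i : ℕ) : ℝ) ^ (-s)) := by
                have hsne : s - 1 ≠ 0 := by linarith
                field_simp
            _ ≤ m ^ s / (s-1) * (((n₀ + i : ℕ) : ℝ) ^ (-(s-1)) - ((n₀ + 1 + i : ℕ) : ℝ) ^ (-(s-1))) := by
                apply mul_le_mul_of_nonneg_left hkey (by positivity)
            _ = m ^ s / (s - 1) * (((n₀ + i : ℕ):ℝ) ^ (-(s-1)) - ((n₀ + (i+1) : ℕ):ℝ) ^ (-(s-1))) := by
                congr 3
                push_cast; ring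
        calc ∑ i ∈ Finset.range (N - (n₀+1)), g (n₀ + 1 + i)
            ≤ ∑ i ∈ Finset.range (N - (n₀+1)), C * (h i - h (i+1)) :=
              Finset.sum_le_sum fun i _ => hbound i
          _ = C * (h 0 - h (N - (n₀+1))) := by
              rw [← Finset.mul_sum, Finset.sum_range_sub' h]
          _ ≤ C * h 0 := by
              have : 0 ≤ h (N - (n₀+1)) := by
                simp only [hh_def]
                positivity
              nlinarith
          _ ≤ m / (s - 1) := by
              simp only [hC_def, hh_def, Nat.add_zero]
              have hn₀pos : (0:ℝ) < (n₀:ℝ) := lt_trans hm0 hmn₀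
              have e : m ^ s = m * m ^ (s-1) := by
                nth_rewrite 1 [show s = 1 + (s-1) by ring]
                rw [Real.rpow_add hm0, Real.rpow_one]
              have hle : m ^ (s-1) * (n₀:ℝ) ^ (-(s-1)) ≤ 1 := by
                rw [Real.rpow_neg hn₀pos.le, ← div_eq_mul_inv,
                  div_le_one (Real.rpow_pos_of_pos hn₀pos _)]
                exact Real.rpow_le_rpow hm0.le hmn₀.le (by linarith)
              calc m ^ s / (s-1) * (n₀:ℝ) ^ (-(s-1))
                  = m / (s-1) * (m^(s-1) * (n₀:ℝ)^(-(s-1))) := by rw [e]; ring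
                _ ≤ m / (s-1) * 1 := mul_le_mul_of_nonneg_left hle (by positivity)
                _ = m / (s-1) := mul_one _
      calc g n₀ + ∑ i ∈ Finset.Ico (n₀+1) N, g i ≤ 1 + m / (s-1) := add_le_add hterm0 htail
        _ = B := hB_def.symm
  have hsummable : Summable f := summable_of_sum_range_le hf_nonneg hps
  have htsum : ∑' n, f n ≤ B := Real.tsum_le_of_sum_range_le hf_nonneg hps
  refine ⟨hsummable, htsum.trans ?_⟩
  -- B ≤ 8 * (m/k + 1)
  have hk0 : (0:ℝ) < (k:ℝ) := by positivity
  have hk8 : (k:ℝ)/8 ≤ s - 1 := by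
    simp only [hs_def]
    have : (4:ℝ) ≤ (k:ℝ) := by exact_mod_cast hk4
    linarith
  have h1 : m / (s-1) ≤ m / ((k:ℝ)/8) := by
    apply div_le_div_of_nonneg_left hm0.le (by positivity) hk8
  have h2 : m / ((k:ℝ)/8) = 8 * (m / (k:ℝ)) := by field_simp
  simp only [hB_def]
  rw [h2] at h1
  linarith
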